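/- Let Y be a real topological vector space and f : Y → EReal. Then f is continuous if and only if epi f is closed in Y × ℝ and epi f + {t·(0_Y, 1) : t > 0} ⊆ int(epi f). -/

import Mathlib

open Pointwise

theorem continuous_iff_epigraph {Y : Type*} [AddCommGroup Y] [Module ℝ Y]
    [TopologicalSpace Y] [IsTopologicalAddGroup Y] [ContinuousSMul ℝ Y] (f : Y → EReal) :
    Continuous f ↔
      IsClosed {p : Y × ℝ | f p.1 ≤ (p.2 : EReal)} ∧
      {p : Y × ℝ | f p.1 ≤ (p.2 : EReal)} +
          {q : Y × ℝ | ∃ t : ℝ, 0 < t ∧ q = t • ((0 : Y), (1 : ℝ))} ⊆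
        interior {p : Y × ℝ | f p.1 ≤ (p.2 : EReal)} := by
  constructor
  · intro hf
    have hcont : Continuous fun p : Y × ℝ => ((p.2 : EReal)) :=
      continuous_coe_real_ereal.comp continuous_snd
    refine ⟨isClosed_le (hf.comp continuous_fst) hcont, ?_⟩
    rintro p ⟨a, ha, b, ⟨t, ht, rfl⟩, rfl⟩
    have hopen : IsOpen {p : Y × ℝ | f p.1 < (p.2 : EReal)} :=
      isOpen_lt (hf.comp continuous_fst) hcont
    have hsub2 : {p : Y × ℝ | f p.1 < (p.2 : EReal)} ⊆
        interior {p : Y × ℝ | f p.1 ≤ (p.2 : EReal)} :=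
      interior_maximal (fun q (hq : f q.1 < (q.2 : EReal)) => (le_of_lt hq : f q.1 ≤ (q.2 : EReal))) hopen
    apply hsub2
    show f (a.1 + t • (0:Y)) < ((a.2 + t • (1:ℝ) : ℝ) : EReal)
    have : a.1 + t • (0:Y) = a.1 := by simp
    rw [this]
    calc f a.1 ≤ (a.2 : EReal) := ha
      _ < ((a.2 + t • (1:ℝ) : ℝ) : EReal) := by
          rw [EReal.coe_lt_coe_iff]; simp [ht]
  · rintro ⟨hclosed, hsub⟩
    rw [continuous_iff_continuousAt]
    intro y
    rw [continuousAt_iff_lower_upperSemicontinuousAt]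
    constructor
    · intro c hc
      obtain ⟨t, hct, htf⟩ := EReal.exists_between_coe_real hc
      have hopen : IsOpen {y' : Y | (y', t) ∉ {p : Y × ℝ | f p.1 ≤ (p.2 : EReal)}} :=
        hclosed.isOpen_compl.preimage (continuous_id.prodMk continuous_const)
      have hy : y ∈ {y' : Y | (y', t) ∉ {p : Y × ℝ | f p.1 ≤ (p.2 : EReal)}} := by
        simp only [Set.mem_setOf_eq]; exact not_le.2 htf
      filter_upwards [hopen.mem_nhds hy] with y' hy'
      exact lt_trans hct (not_le.1 hy')
    · intro c hc
      obtain ⟨t, hft, htc⟩ := EReal.exists_between_coe_real hc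
      obtain ⟨t', htt', ht'c⟩ := EReal.exists_between_coe_real htc
      have hmem : ((y, t') : Y × ℝ) ∈ interior {p : Y × ℝ | f p.1 ≤ (p.2 : EReal)} := by
        apply hsub
        refine ⟨(y, t), le_of_lt hft, (t' - t) • ((0:Y), (1:ℝ)),
          ⟨t' - t, by exact_mod_cast sub_pos.2 (EReal.coe_lt_coe_iff.1 htt'), rfl⟩, ?_⟩
        simp [Prod.ext_iff, smul_eq_mul]
      have hopen : IsOpen {y' : Y | (y', t') ∈ interior {p : Y × ℝ | f p.1 ≤ (p.2 : EReal)}} :=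
        isOpen_interior.preimage (continuous_id.prodMk continuous_const)
      filter_upwards [hopen.mem_nhds hmem] with y' hy'
      have h2 : (y', t') ∈ {p : Y × ℝ | f p.1 ≤ (p.2 : EReal)} := interior_subset hy'
      exact lt_of_le_of_lt h2 ht'c
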